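/- Let ρ be a PPT state of a 2×4 system with rank ρ = 5 and rank ρ^{T_A} = 7. Then there exist nonzero vectors e ∈ ℂ² and f ∈ ℂ⁴ such that the product vector e ⊗ f lies in the range of ρ and conj(e) ⊗ f lies in the range of ρ^{T_A}, where conj(e) is the entrywise complex conjugate of e. -/

import Mathlib

open Matrix BigOperators
open scoped ComplexOrder

noncomputable section

namespace Rank57Aux

open Complex Finset Real


open Complex Finset

/-- Orthogonality characterization of the range of a Hermitian matrix. -/
lemma herm_mem_range {ι : Type*} [Fintype ι] [DecidableEq ι]
    (M : Matrix ι ι ℂ) (hM : M.IsHermitian) (x : ι → ℂ)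
    (hx : ∀ k : ι → ℂ, M.mulVec k = 0 → ∑ i, (starRingEnd ℂ) (k i) * x i = 0) :
    ∃ v, M.mulVec v = x := by
  classical
  set T : EuclideanSpace ℂ ι →ₗ[ℂ] EuclideanSpace ℂ ι := Matrix.toEuclideanLin M with hTdef
  have hT : ∀ v : ι → ℂ, T (WithLp.toLp 2 v) = WithLp.toLp 2 (M.mulVec v) := fun v => rfl
  have hsymm : T.IsSymmetric := (Matrix.isHermitian_iff_isSymmetric).1 hM
  set K := LinearMap.ker T with hK
  have hle : LinearMap.range T ≤ Kᗮ := by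
    rintro _ ⟨v, rfl⟩
    rw [Submodule.mem_orthogonal]
    intro u hu
    have hu0 : T u = 0 := hu
    calc inner ℂ u (T v) = inner ℂ (T u) v := (hsymm u v).symm
    _ = (0:ℂ) := by rw [hu0]; simp
  have h1 : Module.finrank ℂ (LinearMap.range T) + Module.finrank ℂ K
      = Module.finrank ℂ (EuclideanSpace ℂ ι) := LinearMap.finrank_range_add_finrank_ker T
  have h2 : Module.finrank ℂ K + Module.finrank ℂ Kᗮ
      = Module.finrank ℂ (EuclideanSpace ℂ ι) := Submodule.finrank_add_finrank_orthogonal K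
  have heq : LinearMap.range T = Kᗮ := Submodule.eq_of_le_of_finrank_le hle (by omega)
  set x' : EuclideanSpace ℂ ι := (WithLp.equiv 2 (ι → ℂ)).symm x with hx'def
  have hxK : x' ∈ Kᗮ := by
    rw [Submodule.mem_orthogonal]
    intro u hu
    have h0 : M.mulVec (WithLp.ofLp u) = 0 := by
      have := congrArg WithLp.ofLp (hT (WithLp.ofLp u)); simpa [show T u = 0 from hu] using this.symm
    have := hx (WithLp.ofLp u) h0
    simpa [PiLp.inner_apply, RCLike.inner_apply, hx'def, mul_comm] using this
  rw [← heq] at hxK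
  obtain ⟨v, hv⟩ := hxK
  exact ⟨WithLp.ofLp v, by have := congrArg WithLp.ofLp (hT (WithLp.ofLp v)); simpa [hv, hx'def] using this.symm⟩

/-- If `x` is orthogonal to every basis vector of a submodule, it is orthogonal
to every element. -/
lemma orth_all_of_basis {ι : Type*} [Fintype ι] {K : Submodule ℂ (ι → ℂ)} {m : ℕ}
    (b : Module.Basis (Fin m) ℂ K) (x : ι → ℂ)
    (hb : ∀ i, ∑ j, (starRingEnd ℂ) ((b i : ι → ℂ) j) * x j = 0) :
    ∀ k ∈ K, ∑ j, (starRingEnd ℂ) (k j) * x j = 0 := by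
  intro k hk
  have hrepr : (⟨k, hk⟩ : K) = ∑ i, (b.repr ⟨k, hk⟩ i) • b i := (b.sum_repr ⟨k, hk⟩).symm
  have hco : k = ∑ i, (b.repr ⟨k, hk⟩ i) • ((b i : ι → ℂ)) := by
    exact (congrArg Subtype.val hrepr).trans (by rw [Submodule.coe_sum]; rfl)
  have hkj : ∀ j, k j = ∑ i, (b.repr ⟨k, hk⟩ i) * ((b i : ι → ℂ) j) := by
    intro j
    conv_lhs => rw [hco]
    simp [Finset.sum_apply]
  calc ∑ j, (starRingEnd ℂ) (k j) * x j
      = ∑ j, ∑ i, (starRingEnd ℂ) ((b.repr ⟨k,hk⟩ i)) * ((starRingEnd ℂ) ((b i : ι → ℂ) j) * x j) := by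
        refine Finset.sum_congr rfl fun j _ => ?_
        rw [hkj j, map_sum, Finset.sum_mul]
        exact Finset.sum_congr rfl fun i _ => by rw [_root_.map_mul]; ring
    _ = ∑ i, (starRingEnd ℂ) ((b.repr ⟨k,hk⟩ i)) * ∑ j, (starRingEnd ℂ) ((b i : ι → ℂ) j) * x j := by
        rw [Finset.sum_comm]
        exact Finset.sum_congr rfl fun i _ => by rw [Finset.mul_sum]
    _ = 0 := by simp [hb]



open Complex Finset Real

lemma winding_root (u v h : ℂ → ℂ) (hu : Continuous u) (hv : Continuous v)
    (hh : Continuous h) (hv0 : v 0 ≠ 0)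
    (hrep : ∀ t : ℂ, t ≠ 0 → h t = t^3 * u t⁻¹ + (starRingEnd ℂ) t * (t^3 * v t⁻¹)) :
    ∃ t, h t = 0 := by
  by_contra hno
  push_neg at hno
  obtain ⟨M0, hM0⟩ := (isCompact_closedBall (0:ℂ) 1).exists_bound_of_continuousOn hu.continuousOn
  set M : ℝ := max M0 1 with hMdef
  have hM1 : (1:ℝ) ≤ M := le_max_right _ _
  have hMpos : (0:ℝ) < M := lt_of_lt_of_le one_pos hM1
  have hM : ∀ x ∈ Metric.closedBall (0:ℂ) 1, ‖u x‖ ≤ M :=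
    fun x hx => le_trans (hM0 x hx) (le_max_left _ _)
  have hv0pos : 0 < ‖v 0‖ := norm_pos_iff.2 hv0
  obtain ⟨δ, hδpos, hδ⟩ := Metric.continuousAt_iff.1 (hv.continuousAt (x := 0)) (‖v 0‖/4)
    (by positivity)
  set R : ℝ := max (max 1 (2/δ)) (4*M/‖v 0‖) with hRdef
  have hR1 : (1:ℝ) ≤ R := le_trans (le_max_left _ _) (le_max_left _ _)
  have hRpos : (0:ℝ) < R := lt_of_lt_of_le one_pos hR1
  have hRne : (R:ℂ) ≠ 0 := by
    simpa using ne_of_gt (show (0:ℝ) < R from hRpos)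
  have hRδ : 1/R < δ := by
    have h2δ : 2/δ ≤ R := le_trans (le_max_right _ _) (le_max_left _ _)
    have hd2 : δ * (2/δ) = 2 := by field_simp
    rw [div_lt_iff₀ hRpos]
    nlinarith [mul_le_mul_of_nonneg_left h2δ (le_of_lt hδpos)]
  have hRM : M/R ≤ ‖v 0‖/4 := by
    have h4M : 4*M/‖v 0‖ ≤ R := le_max_right _ _
    have heq : 4*M/‖v 0‖*‖v 0‖ = 4*M := div_mul_cancel₀ _ (ne_of_gt hv0pos)
    rw [div_le_div_iff₀ hRpos (by norm_num : (0:ℝ) < 4)]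
    nlinarith [mul_le_mul_of_nonneg_right h4M (le_of_lt hv0pos)]
  -- circle parametrization
  set w : ℝ → ℂ := fun θ => Complex.exp ((θ:ℂ) * Complex.I) with hwdef
  have hwθ : ∀ θ : ℝ, w θ = Complex.exp ((θ:ℂ) * Complex.I) := fun _ => rfl
  have hwne : ∀ θ, w θ ≠ 0 := fun θ => Complex.exp_ne_zero _
  have hwabs : ∀ θ, ‖w θ‖ = 1 := fun θ => Complex.norm_exp_ofReal_mul_I θ
  have hwcont : Continuous w := Complex.continuous_exp.comp (continuous_ofReal.mul continuous_const)
  have hwconj : ∀ θ, (starRingEnd ℂ) (w θ) = (w θ)⁻¹ := by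
    intro θ
    rw [hwθ, ← Complex.exp_conj, ← Complex.exp_neg]
    congr 1
    rw [map_mul (starRingEnd ℂ), Complex.conj_ofReal, Complex.conj_I]
    ring
  have hwper : w (2*π) = 1 := by
    rw [hwθ]; push_cast; exact Complex.exp_two_pi_mul_I
  have hw0 : w 0 = 1 := by rw [hwθ]; simp
  set z : ℝ → ℂ := fun θ => (R:ℂ) * w θ with hzdef
  have hzθ : ∀ θ, z θ = (R:ℂ) * w θ := fun _ => rfl
  have hzne : ∀ θ, z θ ≠ 0 := fun θ => mul_ne_zero hRne (hwne θ)
  have hzabs : ∀ θ, ‖z θ‖ = R := by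
    intro θ
    rw [hzθ, norm_mul, hwabs, Complex.norm_real]
    simp [abs_of_pos hRpos]
  set c : ℂ := v 0 * (R:ℂ)^4 with hcdef
  have hcne : c ≠ 0 := mul_ne_zero hv0 (pow_ne_zero _ hRne)
  set G : ℝ → ℂ := fun θ => h (z θ) / (c * (w θ)^2) with hGdef
  have hGθ : ∀ θ, G θ = h (z θ) / (c * (w θ)^2) := fun _ => rfl
  have key : ∀ θ, G θ - 1
      = u ((z θ)⁻¹) * w θ / ((R:ℂ) * v 0) + (v ((z θ)⁻¹) - v 0) / v 0 := by
    intro θ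
    rw [hGθ, hrep (z θ) (hzne θ)]
    rw [hzθ θ, hcdef, map_mul (starRingEnd ℂ), Complex.conj_ofReal, hwconj θ, mul_inv]
    have hwn := hwne θ
    field_simp
    ring
  have hεabs : ∀ θ, ‖(z θ)⁻¹‖ = 1/R := by
    intro θ; rw [norm_inv, hzabs θ, one_div]
  have hεmem : ∀ θ, (z θ)⁻¹ ∈ Metric.closedBall (0:ℂ) 1 := by
    intro θ
    rw [mem_closedBall_zero_iff, hεabs θ]
    rw [div_le_one hRpos]; exact hR1
  have hG1 : ∀ θ, ‖G θ - 1‖ < 1/2 := by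
    intro θ
    rw [key θ]
    have t1 : ‖u ((z θ)⁻¹) * w θ / ((R:ℂ) * v 0)‖ ≤ 1/4 := by
      rw [norm_div, norm_mul, norm_mul, hwabs θ, Complex.norm_real]
      rw [Real.norm_eq_abs, abs_of_pos hRpos]
      have hb : ‖u ((z θ)⁻¹)‖ ≤ M := hM _ (hεmem θ)
      have hpos : (0:ℝ) < R * ‖v 0‖ := mul_pos hRpos hv0pos
      rw [div_le_iff₀ hpos]
      calc ‖u ((z θ)⁻¹)‖ * 1 = ‖u ((z θ)⁻¹)‖ := mul_one _
      _ ≤ M := hb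
      _ = (M/R) * R := by field_simp
      _ ≤ (‖v 0‖/4) * R := mul_le_mul_of_nonneg_right hRM (le_of_lt hRpos)
      _ = 1/4 * (R * ‖v 0‖) := by ring
    have t2 : ‖(v ((z θ)⁻¹) - v 0) / v 0‖ < 1/4 := by
      have hd : dist ((z θ)⁻¹) 0 < δ := by
        rw [Complex.dist_eq, sub_zero, hεabs θ]
        exact hRδ
      have := hδ hd
      rw [Complex.dist_eq] at this
      rw [norm_div]
      rw [div_lt_iff₀ hv0pos]
      calc ‖v ((z θ)⁻¹) - v 0‖ = ‖v ((z θ)⁻¹) - v 0‖ := rfl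
      _ < ‖v 0‖/4 := this
      _ = 1/4 * ‖v 0‖ := by ring
    calc ‖u ((z θ)⁻¹) * w θ / ((R:ℂ) * v 0) + (v ((z θ)⁻¹) - v 0) / v 0‖
        ≤ ‖u ((z θ)⁻¹) * w θ / ((R:ℂ) * v 0)‖ + ‖(v ((z θ)⁻¹) - v 0) / v 0‖ := norm_add_le _ _
    _ < 1/2 := by linarith
  have hGne : ∀ θ, G θ ≠ 0 := by
    intro θ hzero
    have := hG1 θ
    rw [hzero] at this
    simp at this
    linarith
  have hGre : ∀ θ, 0 < (G θ).re := by
    intro θ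
    have h1 : |(G θ - 1).re| ≤ ‖G θ - 1‖ := Complex.abs_re_le_norm _
    have h2 := hG1 θ
    have h3 : (G θ).re = (G θ - 1).re + 1 := by simp
    have := abs_le.1 h1
    linarith
  have hGslit : ∀ θ, G θ ∈ Complex.slitPlane := fun θ => Complex.mem_slitPlane_iff.2 (Or.inl (hGre θ))
  have hGcont : Continuous G := by
    rw [hGdef]
    apply Continuous.div
    · exact hh.comp (continuous_const.mul hwcont)
    · exact continuous_const.mul (hwcont.pow 2)
    · intro θ
      exact mul_ne_zero hcne (pow_ne_zero _ (hwne θ))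
  -- The explicit logarithm L
  set L : ℝ → ℂ := fun θ => Complex.log c + 2*(θ:ℂ)*Complex.I + Complex.log (G θ) with hLdef
  have hLθ : ∀ θ, L θ = Complex.log c + 2*(θ:ℂ)*Complex.I + Complex.log (G θ) := fun _ => rfl
  have hexpL : ∀ θ, Complex.exp (L θ) = h (z θ) := by
    intro θ
    rw [hLθ, Complex.exp_add, Complex.exp_add, Complex.exp_log hcne, Complex.exp_log (hGne θ)]
    rw [hGθ]
    have : Complex.exp (2*(θ:ℂ)*Complex.I) = (w θ)^2 := by
      rw [hwθ, ← Complex.exp_nat_mul]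
      congr 1
      push_cast
      ring
    rw [this]
    field_simp
    exact mul_div_cancel_left₀ _ (hwne θ)
  have hLcont : Continuous L := by
    rw [hLdef]
    apply Continuous.add
    · apply Continuous.add continuous_const
      exact (continuous_const.mul (Complex.continuous_ofReal)).mul continuous_const
    · rw [continuous_iff_continuousAt]
      intro θ
      exact hGcont.continuousAt.clog (hGslit θ)
  have hGper : G (2*π) = G 0 := by
    rw [hGθ, hGθ, hzθ, hzθ, hwper, hw0]
  have hLper : L (2*π) - L 0 = 4*(π:ℂ)*Complex.I := by
    rw [hLθ, hLθ, hGper]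
    push_cast
    ring
  -- the radial logarithm ψ
  have hcomp : IsCompact (Metric.closedBall (0:ℂ) R) := isCompact_closedBall _ _
  obtain ⟨t₀, ht₀mem, ht₀min⟩ := hcomp.exists_isMinOn
    ⟨0, by simp [le_of_lt hRpos]⟩ (hh.norm.continuousOn)
  set μ : ℝ := ‖h t₀‖ with hμdef
  have hμpos : 0 < μ := norm_pos_iff.2 (hno t₀)
  have hμmin : ∀ x ∈ Metric.closedBall (0:ℂ) R, μ ≤ ‖h x‖ := fun x hx => ht₀min hx
  obtain ⟨δ₀, hδ₀pos, hδ₀⟩ := Metric.uniformContinuousOn_iff.1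
    (hcomp.uniformContinuousOn_of_continuous hh.continuousOn) μ hμpos
  obtain ⟨N, hN⟩ := exists_nat_gt (R / δ₀)
  have hNpos : 0 < (N:ℝ) := lt_of_le_of_lt (div_nonneg (le_of_lt hRpos) (le_of_lt hδ₀pos)) hN
  have hNne : (N:ℝ) ≠ 0 := ne_of_gt hNpos
  have hRN : R / N < δ₀ := by
    rw [div_lt_iff₀ hNpos]
    calc R = (R/δ₀) * δ₀ := by field_simp
    _ < N * δ₀ := by exact mul_lt_mul_of_pos_right hN hδ₀pos
    _ = δ₀ * N := mul_comm _ _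
  set X : ℕ → ℝ → ℂ := fun j θ => ((j * R / N : ℝ) : ℂ) * w θ with hXdef
  have hXθ : ∀ j θ, X j θ = ((j * R / N : ℝ) : ℂ) * w θ := fun _ _ => rfl
  have hX0 : ∀ θ, X 0 θ = 0 := by intro θ; rw [hXθ]; push_cast; simp
  have hXN : ∀ θ, X N θ = z θ := by
    intro θ; rw [hXθ, hzθ]
    congr 2
    field_simp
  have hXmem : ∀ j θ, j ≤ N → X j θ ∈ Metric.closedBall (0:ℂ) R := by
    intro j θ hj
    rw [mem_closedBall_zero_iff, hXθ, norm_mul, hwabs, mul_one, Complex.norm_real,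
      Real.norm_eq_abs]
    rw [_root_.abs_of_nonneg (show (0:ℝ) ≤ (j:ℝ)*R/N by positivity)]
    rw [div_le_iff₀ hNpos]
    calc (j:ℝ) * R ≤ N * R := by
          exact mul_le_mul_of_nonneg_right (by exact_mod_cast hj) (le_of_lt hRpos)
    _ = R * N := mul_comm _ _
  have hXdist : ∀ j θ, dist (X (j+1) θ) (X j θ) = R/N := by
    intro j θ
    rw [Complex.dist_eq, hXθ, hXθ, ← sub_mul, norm_mul, hwabs, mul_one]
    rw [← Complex.ofReal_sub, Complex.norm_real, Real.norm_eq_abs]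
    have hcst : ((j+1 : ℕ) : ℝ) * R / N - (j:ℝ)*R/N = R/N := by push_cast; ring
    rw [hcst, _root_.abs_of_pos (div_pos hRpos hNpos)]
  have hratio : ∀ j θ, j < N → ‖h (X (j+1) θ) / h (X j θ) - 1‖ < 1 := by
    intro j θ hj
    have hmem1 : X (j+1) θ ∈ Metric.closedBall (0:ℂ) R := hXmem _ _ (by omega)
    have hmem0 : X j θ ∈ Metric.closedBall (0:ℂ) R := hXmem _ _ (by omega)
    have hdist : dist (X (j+1) θ) (X j θ) < δ₀ := by rw [hXdist]; exact hRN
    have hd := hδ₀ _ hmem1 _ hmem0 hdist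
    rw [Complex.dist_eq] at hd
    have hne := hno (X j θ)
    rw [div_sub_one hne, norm_div]
    rw [div_lt_one (norm_pos_iff.2 hne)]
    calc ‖h (X (j+1) θ) - h (X j θ)‖ = ‖h (X (j+1) θ) - h (X j θ)‖ := rfl
    _ < μ := hd
    _ ≤ ‖h (X j θ)‖ := hμmin _ hmem0
  have hratio_slit : ∀ j θ, j < N → h (X (j+1) θ) / h (X j θ) ∈ Complex.slitPlane := by
    intro j θ hj
    apply Complex.mem_slitPlane_iff.2
    left
    have h1 : |(h (X (j+1) θ) / h (X j θ) - 1).re| ≤ ‖h (X (j+1) θ) / h (X j θ) - 1‖ :=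
      Complex.abs_re_le_norm _
    have h2 := hratio j θ hj
    have h3 : (h (X (j+1) θ) / h (X j θ)).re = (h (X (j+1) θ) / h (X j θ) - 1).re + 1 := by simp
    have := abs_le.1 h1
    linarith
  set ψ : ℝ → ℂ := fun θ => Complex.log (h 0)
      + ∑ j ∈ Finset.range N, Complex.log (h (X (j+1) θ) / h (X j θ)) with hψdef
  have hψθ : ∀ θ, ψ θ = Complex.log (h 0)
      + ∑ j ∈ Finset.range N, Complex.log (h (X (j+1) θ) / h (X j θ)) := fun _ => rfl
  have hexpψgen : ∀ θ, ∀ n ≤ N, Complex.exp (Complex.log (h 0)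
      + ∑ j ∈ Finset.range n, Complex.log (h (X (j+1) θ) / h (X j θ))) = h (X n θ) := by
    intro θ n
    induction n with
    | zero => intro _; simp [hX0 θ, Complex.exp_log (hno 0)]
    | succ n ih =>
      intro hn
      rw [Finset.sum_range_succ, ← add_assoc, Complex.exp_add, ih (by omega)]
      rw [Complex.exp_log (div_ne_zero (hno _) (hno _))]
      rw [mul_comm, div_mul_cancel₀ _ (hno _)]
  have hexpψ : ∀ θ, Complex.exp (ψ θ) = h (z θ) := by
    intro θ
    rw [hψθ, hexpψgen θ N (le_refl _), hXN]
  have hψcont : Continuous ψ := by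
    rw [hψdef]
    apply Continuous.add continuous_const
    apply continuous_finset_sum
    intro j hj
    have hjN : j < N := Finset.mem_range.1 hj
    have hq : Continuous fun θ => h (X (j+1) θ) / h (X j θ) := by
      apply Continuous.div
      · exact hh.comp (continuous_const.mul hwcont)
      · exact hh.comp (continuous_const.mul hwcont)
      · intro θ; exact hno _
    rw [continuous_iff_continuousAt]
    intro θ
    exact hq.continuousAt.clog (hratio_slit j θ hjN)
  have hψper : ψ (2*π) = ψ 0 := by
    rw [hψθ, hψθ]
    congr 1
    apply Finset.sum_congr rfl
    intro j hj
    rw [hXθ, hXθ, hXθ, hXθ, hwper, hw0]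
  -- comparison
  set Δ : ℝ → ℂ := fun θ => ψ θ - L θ with hΔdef
  have hΔθ : ∀ θ, Δ θ = ψ θ - L θ := fun _ => rfl
  have hexpΔ : ∀ θ, Complex.exp (Δ θ) = 1 := by
    intro θ
    rw [hΔθ, Complex.exp_sub, hexpψ, hexpL, div_self (hno _)]
  have hint : ∀ θ, ∃ n : ℤ, Δ θ = n * (2*(π:ℂ)*Complex.I) :=
    fun θ => Complex.exp_eq_one_iff.1 (hexpΔ θ)
  set NN : ℝ → ℝ := fun θ => (Δ θ * (2*(π:ℂ)*Complex.I)⁻¹).re with hNNdef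
  have hNNθ : ∀ θ, NN θ = (Δ θ * (2*(π:ℂ)*Complex.I)⁻¹).re := fun _ => rfl
  have h2πI : (2*(π:ℂ)*Complex.I) ≠ 0 := by
    simp [Complex.I_ne_zero, Real.pi_ne_zero]
  have hNNint : ∀ θ, ∃ n : ℤ, NN θ = n := by
    intro θ
    obtain ⟨n, hn⟩ := hint θ
    refine ⟨n, ?_⟩
    rw [hNNθ, hn, mul_assoc, mul_inv_cancel₀ h2πI, mul_one]
    simp
  have hNNcont : Continuous NN := by
    rw [hNNdef]
    apply Complex.continuous_re.comp
    exact ((hψcont.sub hLcont).mul continuous_const)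
  have hΔper : Δ (2*π) = Δ 0 - 4*(π:ℂ)*Complex.I := by
    have hL4 : L (2*π) = L 0 + 4*(π:ℂ)*Complex.I := by linear_combination hLper
    rw [hΔθ, hΔθ, hψper, hL4]
    ring
  have hNNper : NN (2*π) = NN 0 - 2 := by
    rw [hNNθ, hNNθ, hΔper, sub_mul]
    rw [Complex.sub_re]
    congr 1
    have : 4*(π:ℂ)*Complex.I * (2*(π:ℂ)*Complex.I)⁻¹ = 2 := by
      field_simp
      ring
    rw [this]
    simp
  -- integers and IVT give a contradiction
  obtain ⟨n0, hn0⟩ := hNNint 0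
  obtain ⟨n2, hn2⟩ := hNNint (2*π)
  have hy : NN (2*π) ≤ n0 - 1/2 ∧ (n0 - 1/2 : ℝ) ≤ NN 0 := by
    constructor
    · rw [hNNper, hn0]; linarith
    · rw [hn0]; linarith
  have hmem := intermediate_value_Icc' (by positivity : (0:ℝ) ≤ 2*π) hNNcont.continuousOn
  have : (n0 - 1/2 : ℝ) ∈ Set.Icc (NN (2*π)) (NN 0) := ⟨hy.1, hy.2⟩
  obtain ⟨θc, _, hθc⟩ := hmem this
  obtain ⟨nc, hnc⟩ := hNNint θc
  rw [hnc] at hθc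
  have hcast : ((n0 - nc : ℤ):ℝ) = 1/2 := by push_cast; linarith
  rcases eq_or_ne (n0 - nc) 0 with hz | hz
  · rw [hz] at hcast; norm_num at hcast
  · have h1 : (1:ℤ) ≤ |n0 - nc| := Int.one_le_abs hz
    have h2 : (1:ℝ) ≤ |((n0 - nc : ℤ):ℝ)| := by
      rw [← Int.cast_abs]
      exact_mod_cast h1
    rw [hcast, _root_.abs_of_pos (by norm_num : (0:ℝ) < 1/2)] at h2
    linarith



open Complex Finset

/-- The vector of signed maximal minors of a 3×4 matrix lies in its kernel. -/
lemma minor_mulVec (C0 : Matrix (Fin 3) (Fin 4) ℂ) :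
    C0.mulVec (fun n => (-1:ℂ)^(n:ℕ) * ((C0.submatrix id n.succAbove).det)) = 0 := by
  funext i
  set D : Matrix (Fin 4) (Fin 4) ℂ := C0.submatrix (Fin.cases i id) id with hDdef
  have hD0 : D.det = 0 := by
    apply Matrix.det_zero_of_row_eq (show (0 : Fin 4) ≠ i.succ from (Fin.succ_ne_zero i).symm)
    funext c
    show C0 (Fin.cases i id (0 : Fin 4)) c = C0 (Fin.cases i id i.succ) c
    rw [Fin.cases_zero, Fin.cases_succ]
    rfl
  have hexp := Matrix.det_succ_row_zero D
  have hsub : ∀ j : Fin 4, (D.submatrix Fin.succ j.succAbove) = C0.submatrix id j.succAbove := by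
    intro j
    funext r c
    show C0 (Fin.cases i id (Fin.succ r)) (id (j.succAbove c)) = C0 (id r) (j.succAbove c)
    rw [Fin.cases_succ]
    rfl
  have hD0j : ∀ j, D 0 j = C0 i j := by
    intro j
    show C0 (Fin.cases i id (0 : Fin 4)) j = C0 i j
    rw [Fin.cases_zero]
  show ∑ j, C0 i j * ((-1:ℂ)^(j:ℕ) * ((C0.submatrix id j.succAbove).det)) = 0
  rw [← hD0]
  rw [hexp]
  apply Finset.sum_congr rfl
  intro j _
  rw [hsub j, hD0j j]
  ring

/-- If all four maximal minors of a 3×4 matrix vanish, then for any linear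
condition we can find a nonzero common kernel vector. -/
lemma caseA (C0 : Matrix (Fin 3) (Fin 4) ℂ) (a : Fin 4 → ℂ)
    (hmin : ∀ n : Fin 4, ((C0.submatrix id n.succAbove).det) = 0) :
    ∃ f : Fin 4 → ℂ, f ≠ 0 ∧ C0.mulVec f = 0 ∧ ∑ n, a n * f n = 0 := by
  classical
  -- the four kernel vectors
  have hv : ∀ n : Fin 4, ∃ v : Fin 3 → ℂ, v ≠ 0 ∧ (C0.submatrix id n.succAbove).mulVec v = 0 :=
    fun n => (Matrix.exists_mulVec_eq_zero_iff.2 (hmin n)).imp (fun v hv => ⟨hv.1, hv.2⟩)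
  choose v hvne hvker using hv
  set ext : Fin 4 → (Fin 4 → ℂ) := fun n => Fin.insertNth (α := fun _ => ℂ) n 0 (v n) with hextdef
  have hext0 : ∀ n, ext n n = 0 := by
    intro n; rw [hextdef]; exact Fin.insertNth_apply_same (α := fun _ => ℂ) n 0 (v n)
  have hextsucc : ∀ n r, ext n (n.succAbove r) = v n r := by
    intro n r; rw [hextdef]; exact Fin.insertNth_apply_succAbove (α := fun _ => ℂ) n 0 (v n) r
  have hextne : ∀ n, ext n ≠ 0 := by
    intro n hcontra
    apply hvne n
    funext r
    have := congrFun hcontra (n.succAbove r)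
    rw [hextsucc] at this
    exact this
  have hextker : ∀ n, C0.mulVec (ext n) = 0 := by
    intro n
    funext i
    show ∑ j, C0 i j * ext n j = 0
    rw [Fin.sum_univ_succAbove (fun j => C0 i j * ext n j) n]
    rw [hext0 n, mul_zero, zero_add]
    have : ∀ r, C0 i (n.succAbove r) * ext n (n.succAbove r)
        = (C0.submatrix id n.succAbove) i r * v n r := by
      intro r; rw [hextsucc]; rfl
    rw [Finset.sum_congr rfl (fun r _ => this r)]
    exact congrFun (hvker n) i
  set Ksub := LinearMap.ker C0.mulVecLin with hKsub
  have hextmem : ∀ n, ext n ∈ Ksub := by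
    intro n
    rw [hKsub, LinearMap.mem_ker, Matrix.mulVecLin_apply]
    exact hextker n
  have hdim2 : 2 ≤ Module.finrank ℂ Ksub := by
    by_contra hlt
    push_neg at hlt
    have hle1 : Module.finrank ℂ Ksub ≤ 1 := by omega
    have hp : Ksub.IsPrincipal := (Submodule.finrank_le_one_iff_isPrincipal Ksub).1 hle1
    obtain ⟨g, hg⟩ := hp.principal
    have hcoef : ∀ n, ∃ c : ℂ, ext n = c • g := by
      intro n
      have := hextmem n
      rw [hg, Submodule.mem_span_singleton] at this
      obtain ⟨c, hc⟩ := this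
      exact ⟨c, hc.symm⟩
    have hg0 : ∀ n, g n = 0 := by
      intro n
      obtain ⟨c, hc⟩ := hcoef n
      have hcne : c ≠ 0 := by
        intro hc0
        apply hextne n
        rw [hc, hc0, zero_smul]
      have := congrFun hc n
      rw [hext0 n] at this
      have : c * g n = 0 := this.symm
      rcases mul_eq_zero.1 this with h | h
      · exact absurd h hcne
      · exact h
    have hgz : g = 0 := funext hg0
    apply hextne 0
    obtain ⟨c, hc⟩ := hcoef 0
    rw [hc, hgz, smul_zero]
  -- the linear condition
  set ℓ : (Fin 4 → ℂ) →ₗ[ℂ] ℂ :=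
    { toFun := fun f => ∑ n, a n * f n
      map_add' := by
        intro f g
        simp [mul_add, Finset.sum_add_distrib]
      map_smul' := by
        intro c f
        simp [Finset.mul_sum]
        apply Finset.sum_congr rfl
        intro n _
        ring } with hℓdef
  have hkerℓ : 3 ≤ Module.finrank ℂ (LinearMap.ker ℓ) := by
    have h1 := LinearMap.finrank_range_add_finrank_ker ℓ
    have h2 : Module.finrank ℂ (LinearMap.range ℓ) ≤ 1 := by
      have := Submodule.finrank_le (LinearMap.range ℓ)
      simpa using this
    have h3 : Module.finrank ℂ (Fin 4 → ℂ) = 4 := by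
      simp [Module.finrank_pi]
    omega
  have hinf : 1 ≤ Module.finrank ℂ ((Ksub ⊓ LinearMap.ker ℓ : Submodule ℂ (Fin 4 → ℂ))) := by
    have h1 := Submodule.finrank_sup_add_finrank_inf_eq Ksub (LinearMap.ker ℓ)
    have h2 : Module.finrank ℂ ((Ksub ⊔ LinearMap.ker ℓ : Submodule ℂ (Fin 4 → ℂ))) ≤ 4 := by
      have := Submodule.finrank_le (Ksub ⊔ LinearMap.ker ℓ : Submodule ℂ (Fin 4 → ℂ))
      have h3 : Module.finrank ℂ (Fin 4 → ℂ) = 4 := by simp [Module.finrank_pi]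
      omega
    omega
  have hnebot : (Ksub ⊓ LinearMap.ker ℓ : Submodule ℂ (Fin 4 → ℂ)) ≠ ⊥ := by
    intro hbot
    rw [hbot] at hinf
    simp at hinf
  obtain ⟨f, hfmem, hfne⟩ := (Submodule.ne_bot_iff _).1 hnebot
  rw [Submodule.mem_inf] at hfmem
  refine ⟨f, hfne, ?_, ?_⟩
  · have h1 := hfmem.1
    rw [hKsub, LinearMap.mem_ker, Matrix.mulVecLin_apply] at h1
    exact h1
  · have h2 := hfmem.2
    rw [LinearMap.mem_ker] at h2
    exact h2



open Complex Finset

lemma swap_sum (A : Fin 2 × Fin 4 → ℂ) (e : Fin 2 → ℂ) (f : Fin 4 → ℂ) :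
    ∑ p : Fin 2 × Fin 4, A p * (e p.1 * f p.2) = ∑ n, (∑ m, A (m, n) * e m) * f n := by
  rw [Fintype.sum_prod_type]
  rw [Finset.sum_comm]
  apply Finset.sum_congr rfl
  intro n _
  rw [Finset.sum_mul]
  apply Finset.sum_congr rfl
  intro m _
  ring


end Rank57Aux

/-- The partial transpose with respect to the first (A) factor:
(ρ^{T_A})_{(i,j),(m,n)} = ρ_{(m,j),(i,n)}. -/
def PTa {M N : ℕ} (ρ : Matrix (Fin M × Fin N) (Fin M × Fin N) ℂ) :
    Matrix (Fin M × Fin N) (Fin M × Fin N) ℂ :=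
  Matrix.of fun p q => ρ (q.1, p.2) (p.1, q.2)

open Rank57Aux

/-- For a PPT 2×4 state with rank ρ = 5 and rank ρ^{T_A} = 7 there exists a
product vector e ⊗ f in the range of ρ such that conj(e) ⊗ f is in the range
of ρ^{T_A}. -/
theorem rank57_product_vector_in_range
    (ρ : Matrix (Fin 2 × Fin 4) (Fin 2 × Fin 4) ℂ)
    (hρ : ρ.PosSemidef) (hρT : (PTa ρ).PosSemidef)
    (hrank : ρ.rank = 5) (hrankT : (PTa ρ).rank = 7) :
    ∃ (e : Fin 2 → ℂ) (f : Fin 4 → ℂ), e ≠ 0 ∧ f ≠ 0 ∧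
      (fun p : Fin 2 × Fin 4 => e p.1 * f p.2) ∈ LinearMap.range ρ.mulVecLin ∧
      (fun p : Fin 2 × Fin 4 => star e p.1 * f p.2) ∈
        LinearMap.range (PTa ρ).mulVecLin := by
  classical
  have hdim8 : Module.finrank ℂ ((Fin 2 × Fin 4) → ℂ) = 8 := by simp
  have hr5 : Module.finrank ℂ (LinearMap.range ρ.mulVecLin) = 5 := hrank
  have hr7 : Module.finrank ℂ (LinearMap.range (PTa ρ).mulVecLin) = 7 := hrankT
  have hker3 : Module.finrank ℂ (LinearMap.ker ρ.mulVecLin) = 3 := by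
    have := LinearMap.finrank_range_add_finrank_ker ρ.mulVecLin
    rw [hdim8, hr5] at this
    omega
  have hker1 : Module.finrank ℂ (LinearMap.ker (PTa ρ).mulVecLin) = 1 := by
    have := LinearMap.finrank_range_add_finrank_ker (PTa ρ).mulVecLin
    rw [hdim8, hr7] at this
    omega
  set bK : Module.Basis (Fin 3) ℂ (LinearMap.ker ρ.mulVecLin) :=
    Module.finBasisOfFinrankEq ℂ _ hker3 with hbK
  set bW : Module.Basis (Fin 1) ℂ (LinearMap.ker (PTa ρ).mulVecLin) :=
    Module.finBasisOfFinrankEq ℂ _ hker1 with hbW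
  set k : Fin 3 → ((Fin 2 × Fin 4) → ℂ) := fun i => (bK i : (Fin 2 × Fin 4) → ℂ) with hk
  set wv : (Fin 2 × Fin 4) → ℂ := (bW 0 : (Fin 2 × Fin 4) → ℂ) with hwv
  set Cm : (Fin 2 → ℂ) → Matrix (Fin 3) (Fin 4) ℂ :=
    fun e => Matrix.of fun i n => ∑ m, (starRingEnd ℂ) (k i (m, n)) * e m with hCm
  set Φ : (Fin 2 → ℂ) → (Fin 4 → ℂ) :=
    fun e n => (-1:ℂ)^(n:ℕ) * (((Cm e).submatrix id n.succAbove).det) with hΦ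
  set P : (Fin 2 → ℂ) → ℂ := fun e => ∑ n, (starRingEnd ℂ) (wv (0, n)) * Φ e n with hP
  set Q : (Fin 2 → ℂ) → ℂ := fun e => ∑ n, (starRingEnd ℂ) (wv (1, n)) * Φ e n with hQ
  -- the finishing move
  have finish : ∀ (e : Fin 2 → ℂ) (f : Fin 4 → ℂ), e ≠ 0 → f ≠ 0 →
      (Cm e).mulVec f = 0 →
      (∑ n, (∑ m, (starRingEnd ℂ) (wv (m, n)) * (starRingEnd ℂ) (e m)) * f n) = 0 →
      (∃ (e : Fin 2 → ℂ) (f : Fin 4 → ℂ), e ≠ 0 ∧ f ≠ 0 ∧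
        (fun p : Fin 2 × Fin 4 => e p.1 * f p.2) ∈ LinearMap.range ρ.mulVecLin ∧
        (fun p : Fin 2 × Fin 4 => star e p.1 * f p.2) ∈
          LinearMap.range (PTa ρ).mulVecLin) := by
    intro e f he hf hker horth
    refine ⟨e, f, he, hf, ?_, ?_⟩
    · have hx1 : ∀ kv : (Fin 2 × Fin 4) → ℂ, ρ.mulVec kv = 0 →
          ∑ i, (starRingEnd ℂ) (kv i) * (e i.1 * f i.2) = 0 := by
        intro kv hkv
        have hmem : kv ∈ LinearMap.ker ρ.mulVecLin := by
          rw [LinearMap.mem_ker, Matrix.mulVecLin_apply]; exact hkv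
        refine orth_all_of_basis bK (fun p => e p.1 * f p.2) ?_ kv hmem
        intro i
        have hs := swap_sum (fun p => (starRingEnd ℂ) (k i p)) e f
        rw [hs]
        have : ∀ n, (∑ m, (starRingEnd ℂ) (k i (m, n)) * e m) = (Cm e) i n := fun n => rfl
        calc ∑ n, (∑ m, (starRingEnd ℂ) (k i (m, n)) * e m) * f n
            = ∑ n, (Cm e) i n * f n := by
              exact Finset.sum_congr rfl fun n _ => by rw [this n]
          _ = ((Cm e).mulVec f) i := rfl
          _ = 0 := by rw [hker]; rfl
      obtain ⟨y, hy⟩ := herm_mem_range ρ hρ.1 (fun p => e p.1 * f p.2) hx1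
      exact ⟨y, by rw [Matrix.mulVecLin_apply]; exact hy⟩
    · have hx2 : ∀ kv : (Fin 2 × Fin 4) → ℂ, (PTa ρ).mulVec kv = 0 →
          ∑ i, (starRingEnd ℂ) (kv i) * (star e i.1 * f i.2) = 0 := by
        intro kv hkv
        have hmem : kv ∈ LinearMap.ker (PTa ρ).mulVecLin := by
          rw [LinearMap.mem_ker, Matrix.mulVecLin_apply]; exact hkv
        refine orth_all_of_basis bW (fun p => star e p.1 * f p.2) ?_ kv hmem
        intro i
        have hi : i = 0 := Subsingleton.elim i 0
        subst hi
        have hs := swap_sum (fun p => (starRingEnd ℂ) (wv p)) (star e) f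
        have hse : ∀ p : Fin 2 × Fin 4, (starRingEnd ℂ) (wv p) * (star e p.1 * f p.2)
            = (starRingEnd ℂ) (wv p) * ((star e) p.1 * f p.2) := fun p => rfl
        calc ∑ p : Fin 2 × Fin 4, (starRingEnd ℂ) ((bW 0 : (Fin 2 × Fin 4) → ℂ) p)
              * (star e p.1 * f p.2)
            = ∑ p : Fin 2 × Fin 4, (starRingEnd ℂ) (wv p) * ((star e) p.1 * f p.2) := rfl
          _ = ∑ n, (∑ m, (starRingEnd ℂ) (wv (m, n)) * (star e) m) * f n := hs
          _ = ∑ n, (∑ m, (starRingEnd ℂ) (wv (m, n)) * (starRingEnd ℂ) (e m)) * f n := by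
              apply Finset.sum_congr rfl
              intro n _
              congr 1
          _ = 0 := horth
      obtain ⟨y, hy⟩ := herm_mem_range (PTa ρ) hρT.1 (fun p => star e p.1 * f p.2) hx2
      exact ⟨y, by rw [Matrix.mulVecLin_apply]; exact hy⟩
  -- case analysis
  by_cases HΦ : ∃ e : Fin 2 → ℂ, e ≠ 0 ∧ Φ e = 0
  · obtain ⟨e₀, he₀, hΦ0⟩ := HΦ
    have hmin : ∀ n : Fin 4, (((Cm e₀).submatrix id n.succAbove).det) = 0 := by
      intro n
      have := congrFun hΦ0 n
      have hne : ((-1:ℂ))^(n:ℕ) ≠ 0 := pow_ne_zero _ (by norm_num)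
      have h0 : ((-1:ℂ))^(n:ℕ) * (((Cm e₀).submatrix id n.succAbove).det) = 0 := this
      exact (mul_eq_zero.1 h0).resolve_left hne
    obtain ⟨f, hfne, hfker, hfsum⟩ := caseA (Cm e₀)
      (fun n => ∑ m, (starRingEnd ℂ) (wv (m, n)) * (starRingEnd ℂ) (e₀ m)) hmin
    exact finish e₀ f he₀ hfne hfker hfsum
  · push_neg at HΦ
    have HΦ' : ∀ e : Fin 2 → ℂ, e ≠ 0 → Φ e ≠ 0 := fun e he => HΦ e he
    -- homogeneity
    have hCm_smul : ∀ (a : ℂ) (e : Fin 2 → ℂ), Cm (a • e) = a • Cm e := by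
      intro a e
      funext i n
      show ∑ m, (starRingEnd ℂ) (k i (m, n)) * ((a • e) m)
          = a * (∑ m, (starRingEnd ℂ) (k i (m, n)) * e m)
      rw [Finset.mul_sum]
      apply Finset.sum_congr rfl
      intro m _
      have : (a • e) m = a * e m := rfl
      rw [this]
      ring
    have hΦ_smul : ∀ (a : ℂ) (e : Fin 2 → ℂ) (n : Fin 4), Φ (a • e) n = a^3 * Φ e n := by
      intro a e n
      show (-1:ℂ)^(n:ℕ) * (((Cm (a • e)).submatrix id n.succAbove).det)
          = a^3 * ((-1:ℂ)^(n:ℕ) * (((Cm e).submatrix id n.succAbove).det))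
      rw [hCm_smul]
      rw [Matrix.submatrix_smul]
      simp only [Pi.smul_apply]
      rw [Matrix.det_smul]
      simp only [Fintype.card_fin]
      ring
    have hP_smul : ∀ (a : ℂ) (e : Fin 2 → ℂ), P (a • e) = a^3 * P e := by
      intro a e
      show ∑ n, (starRingEnd ℂ) (wv (0, n)) * Φ (a • e) n
          = a^3 * ∑ n, (starRingEnd ℂ) (wv (0, n)) * Φ e n
      rw [Finset.mul_sum]
      apply Finset.sum_congr rfl
      intro n _
      rw [hΦ_smul]
      ring
    have hQ_smul : ∀ (a : ℂ) (e : Fin 2 → ℂ), Q (a • e) = a^3 * Q e := by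
      intro a e
      show ∑ n, (starRingEnd ℂ) (wv (1, n)) * Φ (a • e) n
          = a^3 * ∑ n, (starRingEnd ℂ) (wv (1, n)) * Φ e n
      rw [Finset.mul_sum]
      apply Finset.sum_congr rfl
      intro n _
      rw [hΦ_smul]
      ring
    -- continuity
    have hCont : ∀ (F : ℂ → (Fin 2 → ℂ)), Continuous F → ∀ n : Fin 4,
        Continuous fun s => Φ (F s) n := by
      intro F hF n
      apply Continuous.mul continuous_const
      apply Continuous.matrix_det
      apply continuous_matrix
      intro i j
      show Continuous fun s => ∑ m, (starRingEnd ℂ) (k i (m, n.succAbove j)) * F s m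
      apply continuous_finset_sum
      intro m _
      exact continuous_const.mul ((continuous_apply m).comp hF)
    have hPcont : ∀ (F : ℂ → (Fin 2 → ℂ)), Continuous F → Continuous fun s => P (F s) := by
      intro F hF
      show Continuous fun s => ∑ n, (starRingEnd ℂ) (wv (0, n)) * Φ (F s) n
      apply continuous_finset_sum
      intro n _
      exact continuous_const.mul (hCont F hF n)
    have hQcont : ∀ (F : ℂ → (Fin 2 → ℂ)), Continuous F → Continuous fun s => Q (F s) := by
      intro F hF
      show Continuous fun s => ∑ n, (starRingEnd ℂ) (wv (1, n)) * Φ (F s) n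
      apply continuous_finset_sum
      intro n _
      exact continuous_const.mul (hCont F hF n)
    have hF1 : Continuous fun s : ℂ => ![s, (1:ℂ)] := by
      apply continuous_pi
      intro i
      fin_cases i
      · simpa using continuous_id'
      · simpa using continuous_const
    have hF2 : Continuous fun t : ℂ => ![(1:ℂ), t] := by
      apply continuous_pi
      intro i
      fin_cases i
      · simpa using continuous_const
      · simpa using continuous_id'
    set einf : Fin 2 → ℂ := ![0, 1] with heinfdef
    have heinf : einf ≠ 0 := by
      intro hcontra
      have := congrFun hcontra 1
      simp [heinfdef] at this
    by_cases hQinf : Q einf = 0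
    · -- use the point at infinity
      refine finish einf (Φ einf) heinf (HΦ' einf heinf) (minor_mulVec (Cm einf)) ?_
      calc ∑ n, (∑ m, (starRingEnd ℂ) (wv (m, n)) * (starRingEnd ℂ) (einf m)) * Φ einf n
          = ∑ n, (starRingEnd ℂ) (wv (1, n)) * Φ einf n := by
            apply Finset.sum_congr rfl
            intro n _
            congr 1
            rw [Fin.sum_univ_two]
            have h0 : einf 0 = 0 := rfl
            have h1 : einf 1 = 1 := rfl
            rw [h0, h1, map_zero, _root_.map_one, mul_zero, mul_one, zero_add]
        _ = Q einf := rfl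
        _ = 0 := hQinf
    · -- winding case
      obtain ⟨t₀, ht₀⟩ := winding_root (fun s => P ![s, 1]) (fun s => Q ![s, 1])
        (fun t => P ![1, t] + (starRingEnd ℂ) t * Q ![1, t])
        (hPcont _ hF1) (hQcont _ hF1)
        (by
          apply Continuous.add (hPcont _ hF2)
          exact (Complex.continuous_conj).mul (hQcont _ hF2))
        (by
          show Q ![0, 1] ≠ 0
          exact hQinf)
        (by
          intro t ht
          show P ![1, t] + (starRingEnd ℂ) t * Q ![1, t]
              = t^3 * P ![t⁻¹, 1] + (starRingEnd ℂ) t * (t^3 * Q ![t⁻¹, 1])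
          have hsmul : ![(1:ℂ), t] = t • ![t⁻¹, 1] := by
            funext i
            fin_cases i
            · show (1:ℂ) = t * t⁻¹
              rw [mul_inv_cancel₀ ht]
            · show t = t * 1
              rw [mul_one]
          rw [hsmul, hP_smul, hQ_smul])
      set e : Fin 2 → ℂ := ![1, t₀] with hedef
      have he : e ≠ 0 := by
        intro hcontra
        have := congrFun hcontra 0
        simp [hedef] at this
      refine finish e (Φ e) he (HΦ' e he) (minor_mulVec (Cm e)) ?_
      calc ∑ n, (∑ m, (starRingEnd ℂ) (wv (m, n)) * (starRingEnd ℂ) (e m)) * Φ e n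
          = ∑ n, ((starRingEnd ℂ) (wv (0, n)) * Φ e n
              + (starRingEnd ℂ) t₀ * ((starRingEnd ℂ) (wv (1, n)) * Φ e n)) := by
            apply Finset.sum_congr rfl
            intro n _
            rw [Fin.sum_univ_two]
            have h0 : e 0 = 1 := rfl
            have h1 : e 1 = t₀ := rfl
            rw [h0, h1, _root_.map_one]
            ring
        _ = P e + (starRingEnd ℂ) t₀ * Q e := by
            rw [Finset.sum_add_distrib, ← Finset.mul_sum]
        _ = 0 := ht₀
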